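/- Let 0 → A →f B →g C → 0 be a short exact sequence of complexes which is degreewise split, with R-linear sections σ : C^n → B^n satisfying g∘σ = id. Let s(−g) be the simple complex of −g, i.e., s(−g)^n = B^n ⊕ C^{n-1} with d(b,c) = (d b, −g(b) − d c), and let ι : A → s(−g) be the morphism ι(a) = (f(a), 0). Define π′ : s(−g)^n → A^n by π′(b,c) = f^{-1}(b − σ(g(b)) − σ(d c) + d(σ(c))) (the argument lies in the image of f, and f is injective, so this is well defined). Then π′ is a morphism of complexes, π′∘ι = Id_A, and ι∘π′ is chain homotopic to the identity of s(−g). -/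
import Mathlib


noncomputable section

universe u v

/-- A cochain complex of `R`-modules indexed by `ℤ`, with differential of degree `+1`. -/
structure Cplx (R : Type u) [CommRing R] where
  /-- the degree `n` part -/
  X : ℤ → Type v
  [grp : ∀ n, AddCommGroup (X n)]
  [mod : ∀ n, Module R (X n)]
  /-- the differential -/
  d : ∀ n, X n →ₗ[R] X (n + 1)
  dd : ∀ n x, d (n + 1) (d n x) = 0

attribute [instance] Cplx.grp Cplx.mod

variable {R : Type u} [CommRing R]

/-- Transport along an equality of degrees. -/
def Cplx.cE (A : Cplx R) : ∀ {i j : ℤ}, i = j → (A.X i →ₗ[R] A.X j)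
  | _, _, rfl => LinearMap.id

/-- Morphisms of complexes, i.e. `R`-linear chain maps. -/
structure Hom (A B : Cplx R) where
  /-- the components -/
  f : ∀ n, A.X n →ₗ[R] B.X n
  comm : ∀ n x, f (n + 1) (A.d n x) = B.d n (f n x)


@[simp] lemma Cplx.cE_refl (A : Cplx R) {i : ℤ} (h : i = i) (x : A.X i) : A.cE h x = x := rfl

@[simp] lemma Cplx.cE_cE (A : Cplx R) {i j k : ℤ} (h1 : i = j) (h2 : j = k) (x : A.X i) :
    A.cE h2 (A.cE h1 x) = A.cE (h1.trans h2) x := by cases h1; cases h2; rfl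

@[simp] lemma Cplx.d_cE (A : Cplx R) {i j : ℤ} (h : i = j) (x : A.X i) :
    A.d j (A.cE h x) = A.cE (by rw [h]) (A.d i x) := by cases h; rfl

@[simp] lemma fam_cE {A B : Cplx R} (σ : ∀ n, A.X n →ₗ[R] B.X n) {i j : ℤ} (h : i = j)
    (x : A.X i) : σ j (A.cE h x) = B.cE h (σ i x) := by cases h; rfl

/-- Let `0 → A → B → C → 0` be a degreewise split short exact sequence of
complexes, with sections `σ` of `g`.  Consider the simple complex `s(-g)` with
`s(-g)^n = B^n ⊕ C^{n-1}` and `d(b,c) = (d b, -g(b) - d c)`, and `ι : A → s(-g)`,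
`ι(a) = (f(a),0)`.  Let `pσ n (b,c)` be the element of `A^n` with
`f(pσ n (b,c)) = b - σ(g b) - σ(d c) + d(σ c)`.  Then `π′ = pσ` is a morphism of complexes,
`π′ ∘ ι = Id_A` and `ι ∘ π′` is chain homotopic to the identity of `s(-g)`. -/
theorem statement2 {A B C : Cplx R} (f : Hom A B) (g : Hom B C)
    (hinj : ∀ n, Function.Injective (f.f n))
    (hsurj : ∀ n, Function.Surjective (g.f n))
    (hexact : ∀ n, LinearMap.range (f.f n) = LinearMap.ker (g.f n))
    (σ : ∀ n, C.X n →ₗ[R] B.X n)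
    (hσ : ∀ n c, g.f n (σ n c) = c)
    (pσ : ∀ n, (B.X n × C.X (n - 1)) → A.X n)
    (hpσ : ∀ n (b : B.X n) (c : C.X (n - 1)),
      f.f n (pσ n (b, c)) =
        b - σ n (g.f n b) -
          B.cE (show n - 1 + 1 = n by omega) (σ (n - 1 + 1) (C.d (n - 1) c)) +
          B.cE (show n - 1 + 1 = n by omega) (B.d (n - 1) (σ (n - 1) c))) :
    -- `π′` is a morphism of complexes: R-linearity ...
    (∀ n (x y : B.X n × C.X (n - 1)), pσ n (x + y) = pσ n x + pσ n y) ∧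
    (∀ n (r : R) (x : B.X n × C.X (n - 1)), pσ n (r • x) = r • pσ n x) ∧
    -- ... and compatibility with the differentials
    (∀ n (b : B.X n) (c : C.X (n - 1)),
      pσ (n + 1) (B.d n b,
        C.cE (show n = n + 1 - 1 by omega)
          (-(g.f n b) - C.cE (show n - 1 + 1 = n by omega) (C.d (n - 1) c))) =
      A.d n (pσ n (b, c))) ∧
    -- `π′ ∘ ι = Id_A`
    (∀ n (a : A.X n), pσ n (f.f n a, 0) = a) ∧
    -- `ι ∘ π′` is homotopic to the identity of `s(-g)`
    (∃ (K₁ : ∀ n, (B.X n × C.X (n - 1)) →ₗ[R] B.X (n - 1))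
       (K₂ : ∀ n, (B.X n × C.X (n - 1)) →ₗ[R] C.X (n - 1 - 1)),
      ∀ n (b : B.X n) (c : C.X (n - 1)),
        (f.f n (pσ n (b, c)) - b =
          B.cE (show n - 1 + 1 = n by omega) (B.d (n - 1) (K₁ n (b, c))) +
            B.cE (show n + 1 - 1 = n by omega)
              (K₁ (n + 1) (B.d n b,
                C.cE (show n = n + 1 - 1 by omega)
                  (-(g.f n b) - C.cE (show n - 1 + 1 = n by omega) (C.d (n - 1) c))))) ∧
        (0 - c =
          -(g.f (n - 1) (K₁ n (b, c))) -
            C.cE (show n - 1 - 1 + 1 = n - 1 by omega) (C.d (n - 1 - 1) (K₂ n (b, c))) +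
            C.cE (show n + 1 - 1 - 1 = n - 1 by omega)
              (K₂ (n + 1) (B.d n b,
                C.cE (show n = n + 1 - 1 by omega)
                  (-(g.f n b) - C.cE (show n - 1 + 1 = n by omega) (C.d (n - 1) c)))))) := by
  have hgf : ∀ n (a : A.X n), g.f n (f.f n a) = 0 := fun n a => by
    have : f.f n a ∈ LinearMap.ker (g.f n) := (hexact n) ▸ LinearMap.mem_range_self (f.f n) a
    exact this
  refine ⟨?_, ?_, ?_, ?_, ?_⟩
  · rintro n ⟨b1, c1⟩ ⟨b2, c2⟩
    apply hinj n
    simp only [Prod.mk_add_mk, map_add, hpσ]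
    abel
  · rintro n r ⟨b, c⟩
    apply hinj n
    simp only [Prod.smul_mk, map_smul, hpσ, smul_sub, smul_add]
  · intro n b c
    apply hinj (n + 1)
    rw [f.comm, hpσ, hpσ]
    simp [g.comm, map_sub, map_add, C.dd, B.dd, map_neg]
    abel
  · intro n a
    apply hinj n
    rw [hpσ]
    simp [hgf]
  · refine ⟨fun n => (σ (n - 1)).comp (LinearMap.snd R _ _), fun n => 0, fun n b c => ⟨?_, ?_⟩⟩
    · rw [hpσ]
      simp [map_sub, map_neg]
      abel
    · simp [hσ]


end
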